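/- Every rational function f ∈ F(x,y) can be decomposed as f = τ_x(g) − g + τ_y(h) − h + c with g, h ∈ F(x,y) and c ∈ F(x^m,y^m). Moreover, for any such decomposition, f is (τ_x,τ_y)-summable in F(x,y) (i.e., f = τ_x(g') − g' + τ_y(h') − h' for some g', h' ∈ F(x,y)) if and only if c = 0. -/

import Mathlib

/-- `F(x,y)`, realized as `RatFunc (RatFunc F)` (the inner variable is `x`, the outer is `y`). -/
noncomputable abbrev RatFunc2 (F : Type*) [Field F] : Type _ := RatFunc (RatFunc F)

/-- The element `x` of `F(x,y)`. -/
noncomputable abbrev RatFunc2.x (F : Type*) [Field F] : RatFunc2 F := RatFunc.C RatFunc.X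

/-- The element `y` of `F(x,y)`. -/
noncomputable abbrev RatFunc2.y (F : Type*) [Field F] : RatFunc2 F := RatFunc.X

namespace QShiftAux

variable {F : Type*} [Field F]

lemma aM_eq (a : F) : algebraMap F (RatFunc2 F) a = RatFunc.C (RatFunc.C a) := by
  rw [RatFunc.algebraMap_apply]
  simp [RatFunc.algebraMap_eq_C]

/-- Membership in a subfield of `F(x,y)` containing the constants, `x` and `y`. -/
lemma mem_of_xy_subfield (S : Subfield (RatFunc2 F))
    (hC0 : ∀ c : F, RatFunc.C (RatFunc.C c) ∈ S)
    (hx : RatFunc2.x F ∈ S) (hy : RatFunc2.y F ∈ S) (z : RatFunc2 F) : z ∈ S := by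
  have hC : ∀ a : RatFunc F, RatFunc.C a ∈ S := by
    have hpoly : ∀ p : Polynomial F,
        RatFunc.C (algebraMap (Polynomial F) (RatFunc F) p) ∈ S := by
      intro p
      induction p using Polynomial.induction_on with
      | C c => rw [RatFunc.algebraMap_C]; exact hC0 c
      | add p q hp hq => rw [map_add, map_add]; exact add_mem hp hq
      | monomial n c ih =>
          rw [pow_succ, ← mul_assoc, map_mul, map_mul, RatFunc.algebraMap_X]
          exact mul_mem ih hx
    intro a
    induction a using RatFunc.induction_on with
    | f p q hq => rw [map_div₀]; exact div_mem (hpoly p) (hpoly q)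
  have hpoly2 : ∀ p : Polynomial (RatFunc F),
      algebraMap (Polynomial (RatFunc F)) (RatFunc2 F) p ∈ S := by
    intro p
    induction p using Polynomial.induction_on with
    | C c => rw [RatFunc.algebraMap_C]; exact hC c
    | add p q hp hq => rw [map_add]; exact add_mem hp hq
    | monomial n c ih =>
        rw [pow_succ, ← mul_assoc, map_mul, RatFunc.algebraMap_X]
        exact mul_mem ih hy
  induction z using RatFunc.induction_on with
  | f p q hq => exact div_mem (hpoly2 p) (hpoly2 q)

lemma mem_of_xy (E : IntermediateField F (RatFunc2 F)) (hx : RatFunc2.x F ∈ E)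
    (hy : RatFunc2.y F ∈ E) (z : RatFunc2 F) : z ∈ E :=
  mem_of_xy_subfield E.toSubfield
    (fun c => by rw [← aM_eq]; exact E.algebraMap_mem c) hx hy z

/-- equalizer of two algebra homs of a field extension, as an intermediate field -/
def eqIF {K L : Type*} [Field K] [Field L] [Algebra K L] (φ ψ : L →ₐ[K] L) :
    IntermediateField K L where
  carrier := {z | φ z = ψ z}
  mul_mem' ha hb := by simp only [Set.mem_setOf_eq, map_mul] at *; rw [ha, hb]
  add_mem' ha hb := by simp only [Set.mem_setOf_eq, map_add] at *; rw [ha, hb]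
  algebraMap_mem' r := by simp only [Set.mem_setOf_eq, AlgHom.commutes]
  inv_mem' z hz := by simp only [Set.mem_setOf_eq, map_inv₀] at *; rw [hz]

lemma mem_eqIF {K L : Type*} [Field K] [Field L] [Algebra K L] {φ ψ : L →ₐ[K] L} {z : L} :
    z ∈ eqIF φ ψ ↔ φ z = ψ z := Iff.rfl

lemma funext_xy (φ ψ : RatFunc2 F →ₐ[F] RatFunc2 F)
    (hx : φ (RatFunc2.x F) = ψ (RatFunc2.x F)) (hy : φ (RatFunc2.y F) = ψ (RatFunc2.y F)) :
    ∀ z, φ z = ψ z := fun z => mem_of_xy (eqIF φ ψ) hx hy z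

lemma eqext_xy (φ ψ : RatFunc2 F ≃ₐ[F] RatFunc2 F)
    (hx : φ (RatFunc2.x F) = ψ (RatFunc2.x F)) (hy : φ (RatFunc2.y F) = ψ (RatFunc2.y F)) :
    φ = ψ := AlgEquiv.ext (funext_xy φ.toAlgHom ψ.toAlgHom hx hy)

lemma pow_fix (σ : RatFunc2 F ≃ₐ[F] RatFunc2 F) {u : RatFunc2 F} (h : σ u = u) (i : ℕ) :
    (σ ^ i) u = u := by
  induction i with
  | zero => simp
  | succ n ih => rw [pow_succ', AlgEquiv.mul_apply, ih, h]

lemma pow_scale (σ : RatFunc2 F ≃ₐ[F] RatFunc2 F) (c : F) {u : RatFunc2 F}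
    (h : σ u = RatFunc.C (RatFunc.C c) * u) (i : ℕ) :
    (σ ^ i) u = RatFunc.C (RatFunc.C (c ^ i)) * u := by
  induction i with
  | zero => simp
  | succ n ih =>
      rw [pow_succ', AlgEquiv.mul_apply, ih, map_mul, ← aM_eq, AlgEquiv.commutes, h,
        aM_eq, pow_succ, map_mul, map_mul]
      ring

end QShiftAux

namespace QShiftAux

open Finset Module IntermediateField

variable {F : Type*} [Field F]

set_option maxHeartbeats 1000000 in
lemma fixed_mem_adjoin [CharZero F]
    (m : ℕ) (hm : 0 < m) (q : F) (hq : IsPrimitiveRoot q m)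
    (τx τy : RatFunc2 F ≃ₐ[F] RatFunc2 F)
    (hτxx : τx (RatFunc2.x F) = RatFunc.C (RatFunc.C q) * RatFunc2.x F)
    (hτxy : τx (RatFunc2.y F) = RatFunc2.y F)
    (hτyx : τy (RatFunc2.x F) = RatFunc2.x F)
    (hτyy : τy (RatFunc2.y F) = RatFunc.C (RatFunc.C q) * RatFunc2.y F)
    (z : RatFunc2 F) (hzx : τx z = z) (hzy : τy z = z) :
    z ∈ IntermediateField.adjoin F {RatFunc2.x F ^ m, RatFunc2.y F ^ m} := by
  set X := RatFunc2.x F with hX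
  set Y := RatFunc2.y F with hY
  have hqm : q ^ m = 1 := hq.pow_eq_one
  -- powers of the automorphisms on generators
  have hxp : ∀ i, (τx ^ i) X = RatFunc.C (RatFunc.C (q ^ i)) * X := pow_scale τx q hτxx
  have hyp : ∀ j, (τy ^ j) Y = RatFunc.C (RatFunc.C (q ^ j)) * Y := pow_scale τy q hτyy
  have hxyfix : ∀ i, (τx ^ i) Y = Y := pow_fix τx hτxy
  have hyxfix : ∀ j, (τy ^ j) X = X := pow_fix τy hτyx
  set E := IntermediateField.adjoin F {X ^ m, Y ^ m} with hE
  have hxmE : X ^ m ∈ E := IntermediateField.subset_adjoin F {X ^ m, Y ^ m} (by simp)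
  have hymE : Y ^ m ∈ E := IntermediateField.subset_adjoin F {X ^ m, Y ^ m} (by simp)
  -- E is fixed pointwise by τx and τy
  have hfix : ∀ (σ : RatFunc2 F ≃ₐ[F] RatFunc2 F), σ (X ^ m) = X ^ m → σ (Y ^ m) = Y ^ m →
      ∀ w ∈ E, σ w = w := by
    intro σ h1 h2 w hw
    have hle : E ≤ eqIF σ.toAlgHom (AlgHom.id F (RatFunc2 F)) := by
      rw [hE, IntermediateField.adjoin_le_iff]
      intro u hu
      rcases hu with h | h
      · subst h; exact h1
      · rw [Set.mem_singleton_iff] at h; subst h; exact h2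
    exact hle hw
  have hτxXm : τx (X ^ m) = X ^ m := by
    rw [map_pow, hτxx, mul_pow, ← map_pow, ← map_pow, hqm, map_one, map_one, one_mul]
  have hτxYm : τx (Y ^ m) = Y ^ m := by rw [map_pow, hτxy]
  have hτyXm : τy (X ^ m) = X ^ m := by rw [map_pow, hτyx]
  have hτyYm : τy (Y ^ m) = Y ^ m := by
    rw [map_pow, hτyy, mul_pow, ← map_pow, ← map_pow, hqm, map_one, map_one, one_mul]
  have hfixx : ∀ w ∈ E, τx w = w := hfix τx hτxXm hτxYm
  have hfixy : ∀ w ∈ E, τy w = w := hfix τy hτyXm hτyYm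
  -- restrict τx, τy to E-algebra automorphisms
  let τx' : RatFunc2 F ≃ₐ[E] RatFunc2 F := AlgEquiv.ofRingEquiv (f := τx.toRingEquiv)
    (fun e => hfixx e e.2)
  let τy' : RatFunc2 F ≃ₐ[E] RatFunc2 F := AlgEquiv.ofRingEquiv (f := τy.toRingEquiv)
    (fun e => hfixy e e.2)
  have hτx'app : ∀ w : RatFunc2 F, τx' w = τx w := fun _ => rfl
  have hτy'app : ∀ w : RatFunc2 F, τy' w = τy w := fun _ => rfl
  have hpow_agree : ∀ (σ' : RatFunc2 F ≃ₐ[E] RatFunc2 F) (σ : RatFunc2 F ≃ₐ[F] RatFunc2 F), (∀ w : RatFunc2 F, σ' w = σ w) →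
      ∀ (i : ℕ) (w : RatFunc2 F), (σ' ^ i) w = (σ ^ i) w := by
    intro σ' σ hagree i
    induction i with
    | zero => intro w; simp
    | succ n ih =>
        intro w
        rw [pow_succ', pow_succ', AlgEquiv.mul_apply, AlgEquiv.mul_apply, ih, hagree]
  -- integrality and finrank bounds
  have hXint : IsIntegral E X := by
    refine ⟨Polynomial.X ^ m - Polynomial.C (⟨X ^ m, hxmE⟩ : E),
      Polynomial.monic_X_pow_sub_C _ hm.ne', ?_⟩
    simp [Polynomial.eval₂_sub, IntermediateField.algebraMap_apply]
  haveI : FiniteDimensional E E⟮X⟯ := IntermediateField.adjoin.finiteDimensional hXint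
  have hdX : finrank E E⟮X⟯ ≤ m := by
    have hdvd : minpoly E X ∣ (Polynomial.X ^ m - Polynomial.C (⟨X ^ m, hxmE⟩ : E)) :=
      minpoly.dvd E X (by simp [Polynomial.eval₂_sub, IntermediateField.algebraMap_apply])
    have hne : (Polynomial.X ^ m - Polynomial.C (⟨X ^ m, hxmE⟩ : E)) ≠ 0 :=
      (Polynomial.monic_X_pow_sub_C _ hm.ne').ne_zero
    have hle := Polynomial.natDegree_le_of_dvd hdvd hne
    rw [IntermediateField.adjoin.finrank hXint]
    rwa [Polynomial.natDegree_X_pow_sub_C] at hle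
  set Ex := E⟮X⟯ with hEx
  have hXmem : X ∈ Ex := IntermediateField.mem_adjoin_simple_self E X
  have hEmem : ∀ w : E, (w : RatFunc2 F) ∈ Ex := fun w => by
    have := Ex.algebraMap_mem w
    rwa [IntermediateField.algebraMap_apply] at this
  have hYmEx : Y ^ m ∈ Ex := hEmem ⟨Y ^ m, hymE⟩
  have hYint : IsIntegral Ex Y := by
    refine ⟨Polynomial.X ^ m - Polynomial.C (⟨Y ^ m, hYmEx⟩ : Ex),
      Polynomial.monic_X_pow_sub_C _ hm.ne', ?_⟩
    simp [Polynomial.eval₂_sub, IntermediateField.algebraMap_apply]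
  haveI : FiniteDimensional Ex Ex⟮Y⟯ := IntermediateField.adjoin.finiteDimensional hYint
  have hdY : finrank Ex Ex⟮Y⟯ ≤ m := by
    have hdvd : minpoly Ex Y ∣ (Polynomial.X ^ m - Polynomial.C (⟨Y ^ m, hYmEx⟩ : Ex)) :=
      minpoly.dvd Ex Y (by simp [Polynomial.eval₂_sub, IntermediateField.algebraMap_apply])
    have hne : (Polynomial.X ^ m - Polynomial.C (⟨Y ^ m, hYmEx⟩ : Ex)) ≠ 0 :=
      (Polynomial.monic_X_pow_sub_C _ hm.ne').ne_zero
    have hle := Polynomial.natDegree_le_of_dvd hdvd hne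
    rw [IntermediateField.adjoin.finrank hYint]
    rwa [Polynomial.natDegree_X_pow_sub_C] at hle
  have hTop : Ex⟮Y⟯ = (⊤ : IntermediateField Ex (RatFunc2 F)) := by
    rw [eq_top_iff]
    intro w _
    refine mem_of_xy_subfield (Ex⟮Y⟯ : IntermediateField Ex (RatFunc2 F)).toSubfield ?_ ?_ ?_ w
    · intro c
      have hcE : RatFunc.C (RatFunc.C c) ∈ E := by rw [← aM_eq]; exact E.algebraMap_mem c
      have hcEx : RatFunc.C (RatFunc.C c) ∈ Ex := hEmem ⟨_, hcE⟩
      have := (Ex⟮Y⟯ : IntermediateField Ex (RatFunc2 F)).algebraMap_mem ⟨_, hcEx⟩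
      rwa [IntermediateField.algebraMap_apply] at this
    · have := (Ex⟮Y⟯ : IntermediateField Ex (RatFunc2 F)).algebraMap_mem ⟨X, hXmem⟩
      rwa [IntermediateField.algebraMap_apply] at this
    · exact IntermediateField.mem_adjoin_simple_self Ex Y
  haveI : FiniteDimensional Ex (RatFunc2 F) := by
    haveI h := IntermediateField.adjoin.finiteDimensional hYint
    rw [hTop] at h
    exact Module.Finite.equiv IntermediateField.topEquiv.toLinearEquiv
  have hdExL : finrank Ex (RatFunc2 F) ≤ m := by
    have htop' : finrank Ex (⊤ : IntermediateField Ex (RatFunc2 F)) = finrank Ex (RatFunc2 F) :=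
      IntermediateField.finrank_top'
    rw [← htop', ← hTop]
    exact hdY
  haveI : FiniteDimensional E (RatFunc2 F) := FiniteDimensional.trans E Ex (RatFunc2 F)
  have hrank : finrank E (RatFunc2 F) ≤ m * m := by
    haveI : Module.Free E Ex := Module.Free.of_divisionRing E Ex
    rw [← Module.finrank_mul_finrank E Ex (RatFunc2 F)]
    exact Nat.mul_le_mul hdX hdExL
  -- counting automorphisms
  haveI : Algebra.IsAlgebraic E (RatFunc2 F) := Algebra.IsAlgebraic.of_finite E (RatFunc2 F)
  have hcard_le : Fintype.card (RatFunc2 F ≃ₐ[E] RatFunc2 F) ≤ finrank E (RatFunc2 F) := by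
    calc Fintype.card (RatFunc2 F ≃ₐ[E] RatFunc2 F) = Fintype.card (RatFunc2 F →ₐ[E] RatFunc2 F) :=
          Fintype.card_congr (Algebra.IsAlgebraic.algEquivEquivAlgHom E (RatFunc2 F)).toEquiv
      _ ≤ finrank (RatFunc2 F) (RatFunc2 F →ₗ[E] RatFunc2 F) := finrank_algHom E (RatFunc2 F)
      _ = finrank E (RatFunc2 F) := finrank_linearMap_self E (RatFunc2 F) (RatFunc2 F)
  set ι : Fin m × Fin m → (RatFunc2 F ≃ₐ[E] RatFunc2 F) := fun p => τx' ^ (p.1 : ℕ) * τy' ^ (p.2 : ℕ) with hι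
  have hXne : X ≠ 0 := by
    simp only [hX, RatFunc2.x, ne_eq, map_eq_zero]
    exact RatFunc.X_ne_zero
  have hYne : Y ≠ 0 := RatFunc.X_ne_zero
  have hinjF : Function.Injective (algebraMap F (RatFunc2 F)) := (algebraMap F (RatFunc2 F)).injective
  have hιinj : Function.Injective ι := by
    rintro ⟨i1, j1⟩ ⟨i2, j2⟩ heq
    have hXeq : (ι (i1, j1)) X = (ι (i2, j2)) X := by rw [heq]
    have hYeq : (ι (i1, j1)) Y = (ι (i2, j2)) Y := by rw [heq]
    have hval : ∀ (i j : ℕ), (τx' ^ i * τy' ^ j) X = RatFunc.C (RatFunc.C (q ^ i)) * X := by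
      intro i j
      rw [AlgEquiv.mul_apply, hpow_agree τy' τy hτy'app, hyxfix,
        hpow_agree τx' τx hτx'app, hxp]
    have hval2 : ∀ (i j : ℕ), (τx' ^ i * τy' ^ j) Y = RatFunc.C (RatFunc.C (q ^ j)) * Y := by
      intro i j
      rw [AlgEquiv.mul_apply, hpow_agree τy' τy hτy'app, hyp,
        hpow_agree τx' τx hτx'app, map_mul, ← aM_eq, AlgEquiv.commutes, hxyfix]
    rw [hι] at hXeq hYeq
    simp only at hXeq hYeq
    rw [hval i1 j1, hval i2 j2] at hXeq
    rw [hval2 i1 j1, hval2 i2 j2] at hYeq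
    have h1 : q ^ (i1 : ℕ) = q ^ (i2 : ℕ) := by
      have := mul_right_cancel₀ hXne hXeq
      rw [← aM_eq, ← aM_eq] at this
      exact hinjF this
    have h2 : q ^ (j1 : ℕ) = q ^ (j2 : ℕ) := by
      have := mul_right_cancel₀ hYne hYeq
      rw [← aM_eq, ← aM_eq] at this
      exact hinjF this
    have e1 : (i1 : ℕ) = i2 := hq.pow_inj i1.2 i2.2 h1
    have e2 : (j1 : ℕ) = j2 := hq.pow_inj j1.2 j2.2 h2
    ext <;> simp [e1, e2]
  have hcard_ge : m * m ≤ Fintype.card (RatFunc2 F ≃ₐ[E] RatFunc2 F) := by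
    have := Fintype.card_le_of_injective ι hιinj
    rwa [Fintype.card_prod, Fintype.card_fin] at this
  have hcard : Fintype.card (RatFunc2 F ≃ₐ[E] RatFunc2 F) = finrank E (RatFunc2 F) :=
    le_antisymm hcard_le (le_trans hrank hcard_ge)
  haveI : IsGalois E (RatFunc2 F) := IsGalois.of_card_aut_eq_finrank _ _ (by rw [Nat.card_eq_fintype_card]; exact hcard)
  have hcard' : Fintype.card (Fin m × Fin m) = Fintype.card (RatFunc2 F ≃ₐ[E] RatFunc2 F) := by
    rw [Fintype.card_prod, Fintype.card_fin]
    exact le_antisymm hcard_ge (hcard_le.trans hrank)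
  have hsurj : Function.Surjective ι :=
    ((Fintype.bijective_iff_injective_and_card ι).mpr ⟨hιinj, hcard'⟩).2
  have hfixall : ∀ σ : RatFunc2 F ≃ₐ[E] RatFunc2 F, σ z = z := by
    intro σ
    obtain ⟨⟨i, j⟩, rfl⟩ := hsurj σ
    rw [hι]
    simp only
    rw [AlgEquiv.mul_apply, hpow_agree τy' τy hτy'app, pow_fix τy hzy,
      hpow_agree τx' τx hτx'app, pow_fix τx hzx]
  -- Galois correspondence
  have h0 : IntermediateField.fixingSubgroup (⊥ : IntermediateField E (RatFunc2 F)) = ⊤ := by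
    rw [eq_top_iff]
    intro σ _
    rw [IntermediateField.mem_fixingSubgroup_iff]
    intro w hw
    rw [IntermediateField.mem_bot] at hw
    obtain ⟨e, rfl⟩ := hw
    exact σ.commutes e
  have h1 : IntermediateField.fixedField (⊤ : Subgroup (RatFunc2 F ≃ₐ[E] RatFunc2 F)) = ⊥ := by
    rw [← h0, IsGalois.fixedField_fixingSubgroup]
  have hz : z ∈ IntermediateField.fixedField (⊤ : Subgroup (RatFunc2 F ≃ₐ[E] RatFunc2 F)) := by
    intro g
    exact hfixall g
  rw [h1, IntermediateField.mem_bot] at hz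
  obtain ⟨e, he⟩ := hz
  rw [IntermediateField.algebraMap_apply] at he
  rw [← he]
  exact e.2

end QShiftAux

namespace QShiftAux

open Finset

variable {F : Type*} [Field F]

lemma shift_sum (σ : RatFunc2 F ≃ₐ[F] RatFunc2 F) (m : ℕ) (hσ : σ ^ m = 1) (z : RatFunc2 F) :
    ∑ i ∈ range m, (σ ^ (i + 1)) z = ∑ i ∈ range m, (σ ^ i) z := by
  have h1 := Finset.sum_range_succ' (fun i => (σ ^ i) z) m
  have h2 := Finset.sum_range_succ (fun i => (σ ^ i) z) m
  simp only [pow_zero, AlgEquiv.one_apply] at h1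
  rw [hσ] at h2
  simp only [AlgEquiv.one_apply] at h2
  have := h1.symm.trans h2
  exact add_right_cancel this

lemma hilbert (σ : RatFunc2 F ≃ₐ[F] RatFunc2 F) (m : ℕ) (hσ : σ ^ m = 1)
    (hm0 : ((m : ℕ) : RatFunc2 F) ≠ 0) (z : RatFunc2 F)
    (hz : ∑ i ∈ range m, (σ ^ i) z = 0) : ∃ g, z = σ g - g := by
  set T := ∑ i ∈ range m, ∑ j ∈ range i, (σ ^ j) z with hT
  have key : σ T = T - (m : RatFunc2 F) * z := by
    have e1 : σ T = ∑ i ∈ range m, ∑ j ∈ range i, (σ ^ (j + 1)) z := by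
      rw [map_sum]
      refine Finset.sum_congr rfl fun i _ => ?_
      rw [map_sum]
      refine Finset.sum_congr rfl fun j _ => ?_
      rw [← AlgEquiv.mul_apply, ← pow_succ']
    have e2 : ∀ i : ℕ, ∑ j ∈ range i, (σ ^ (j + 1)) z
        = (∑ j ∈ range (i + 1), (σ ^ j) z) - z := by
      intro i
      have h := Finset.sum_range_succ' (fun j => (σ ^ j) z) i
      simp only [pow_zero, AlgEquiv.one_apply] at h
      rw [h]
      ring
    have e4 : ∑ i ∈ range m, ∑ j ∈ range (i + 1), (σ ^ j) z = T := by
      have h5 := Finset.sum_range_succ' (fun i => ∑ j ∈ range i, (σ ^ j) z) m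
      have h6 := Finset.sum_range_succ (fun i => ∑ j ∈ range i, (σ ^ j) z) m
      simp only [Finset.range_zero, Finset.sum_empty, add_zero] at h5
      rw [hz, add_zero] at h6
      rw [← hT] at h6
      exact (h5.symm.trans h6)
    calc σ T = ∑ i ∈ range m, ((∑ j ∈ range (i + 1), (σ ^ j) z) - z) := by
              rw [e1]; exact Finset.sum_congr rfl fun i _ => e2 i
      _ = (∑ i ∈ range m, ∑ j ∈ range (i + 1), (σ ^ j) z) - (m : ℕ) • z := by
              rw [Finset.sum_sub_distrib, Finset.sum_const, Finset.card_range]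
      _ = T - (m : RatFunc2 F) * z := by rw [e4, nsmul_eq_mul]
  refine ⟨-((m : RatFunc2 F)⁻¹ * T), ?_⟩
  rw [map_neg, map_mul, map_inv₀, map_natCast]
  have : σ T = T - (m : RatFunc2 F) * z := key
  rw [this]
  field_simp
  ring

end QShiftAux


open Finset QShiftAux in
set_option maxHeartbeats 1000000 in
/-- Let `F` be an algebraically closed field of characteristic zero, `q ∈ F` a primitive
`m`-th root of unity, and `τ_x, τ_y` the `F`-automorphisms of `F(x,y)` with
`τ_x(x) = q·x`, `τ_x(y) = y`, `τ_y(x) = x`, `τ_y(y) = q·y`.  Every `f ∈ F(x,y)`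
decomposes as `f = τ_x(g) - g + τ_y(h) - h + c` with `g, h ∈ F(x,y)` and
`c ∈ F(x^m,y^m)`; moreover for any such decomposition, `f` is `(τ_x,τ_y)`-summable
in `F(x,y)` iff `c = 0`. -/
theorem qshift_bivariate_normal_form_root_of_unity
    (F : Type*) [Field F] [IsAlgClosed F] [CharZero F]
    (m : ℕ) (hm : 0 < m) (q : F) (hq : IsPrimitiveRoot q m)
    (τx τy : RatFunc2 F ≃ₐ[F] RatFunc2 F)
    (hτxx : τx (RatFunc2.x F) = RatFunc.C (RatFunc.C q) * RatFunc2.x F)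
    (hτxy : τx (RatFunc2.y F) = RatFunc2.y F)
    (hτyx : τy (RatFunc2.x F) = RatFunc2.x F)
    (hτyy : τy (RatFunc2.y F) = RatFunc.C (RatFunc.C q) * RatFunc2.y F)
    (f : RatFunc2 F) :
    (∃ g h c : RatFunc2 F,
        c ∈ IntermediateField.adjoin F {RatFunc2.x F ^ m, RatFunc2.y F ^ m} ∧
        f = τx g - g + τy h - h + c) ∧
    (∀ g h c : RatFunc2 F,
        c ∈ IntermediateField.adjoin F {RatFunc2.x F ^ m, RatFunc2.y F ^ m} →
        f = τx g - g + τy h - h + c →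
        ((∃ g' h' : RatFunc2 F, f = τx g' - g' + τy h' - h') ↔ c = 0)) := by
  have hCZ : CharZero (RatFunc2 F) :=
    charZero_of_injective_algebraMap (algebraMap F (RatFunc2 F)).injective
  have hmL : ((m : ℕ) : RatFunc2 F) ≠ 0 := Nat.cast_ne_zero.mpr hm.ne'
  have hqm : q ^ m = 1 := hq.pow_eq_one
  have hxp : ∀ i, (τx ^ i) (RatFunc2.x F) = RatFunc.C (RatFunc.C (q ^ i)) * RatFunc2.x F :=
    pow_scale τx q hτxx
  have hyp : ∀ j, (τy ^ j) (RatFunc2.y F) = RatFunc.C (RatFunc.C (q ^ j)) * RatFunc2.y F :=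
    pow_scale τy q hτyy
  -- orders
  have hτxm : τx ^ m = 1 := by
    refine eqext_xy _ _ ?_ ?_
    · rw [hxp m, hqm, AlgEquiv.one_apply, map_one, map_one, one_mul]
    · rw [pow_fix τx hτxy m, AlgEquiv.one_apply]
  have hτym : τy ^ m = 1 := by
    refine eqext_xy _ _ ?_ ?_
    · rw [pow_fix τy hτyx m, AlgEquiv.one_apply]
    · rw [hyp m, hqm, AlgEquiv.one_apply, map_one, map_one, one_mul]
  -- commutation
  have hcomm : τx * τy = τy * τx := by
    refine eqext_xy _ _ ?_ ?_
    · rw [AlgEquiv.mul_apply, AlgEquiv.mul_apply, hτyx, hτxx, map_mul, ← aM_eq,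
        AlgEquiv.commutes, hτyx]
    · rw [AlgEquiv.mul_apply, AlgEquiv.mul_apply, hτxy, hτyy, map_mul, ← aM_eq,
        AlgEquiv.commutes, hτxy]
  have hcomm' : Commute τx τy := hcomm
  have commfun : ∀ (i j : ℕ) (w : RatFunc2 F),
      (τx ^ i) ((τy ^ j) w) = (τy ^ j) ((τx ^ i) w) := by
    intro i j w
    rw [← AlgEquiv.mul_apply, ← AlgEquiv.mul_apply, (hcomm'.pow_pow i j).eq]
  -- the averaging operator
  set N : RatFunc2 F → RatFunc2 F :=
    fun w => ∑ i ∈ range m, (τx ^ i) (∑ j ∈ range m, (τy ^ j) w) with hN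
  have hNτx : ∀ w, τx (N w) = N w := by
    intro w
    rw [hN]
    simp only
    rw [map_sum]
    have : ∀ i ∈ range m, τx ((τx ^ i) (∑ j ∈ range m, (τy ^ j) w))
        = (τx ^ (i + 1)) (∑ j ∈ range m, (τy ^ j) w) := by
      intro i _
      rw [← AlgEquiv.mul_apply, ← pow_succ']
    rw [Finset.sum_congr rfl this, shift_sum τx m hτxm]
  have hNτy : ∀ w, τy (N w) = N w := by
    intro w
    rw [hN]
    simp only
    rw [map_sum]
    have : ∀ i ∈ range m, τy ((τx ^ i) (∑ j ∈ range m, (τy ^ j) w))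
        = (τx ^ i) (∑ j ∈ range m, (τy ^ j) w) := by
      intro i _
      have h1 : τy ((τx ^ i) (∑ j ∈ range m, (τy ^ j) w))
          = (τx ^ i) (τy (∑ j ∈ range m, (τy ^ j) w)) := by
        have := commfun i 1 (∑ j ∈ range m, (τy ^ j) w)
        rw [pow_one] at this
        exact this.symm
      rw [h1, map_sum]
      congr 1
      have : ∀ j ∈ range m, τy ((τy ^ j) w) = (τy ^ (j + 1)) w := by
        intro j _
        rw [← AlgEquiv.mul_apply, ← pow_succ']
      rw [Finset.sum_congr rfl this, shift_sum τy m hτym]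
    exact Finset.sum_congr rfl this
  have hNsub : ∀ a b, N (a - b) = N a - N b := by
    intro a b
    rw [hN]
    simp only [map_sub, Finset.sum_sub_distrib]
  have hNadd : ∀ a b, N (a + b) = N a + N b := by
    intro a b
    rw [hN]
    simp only [map_add, Finset.sum_add_distrib]
  have hNx : ∀ g, N (τx g - g) = 0 := by
    intro g
    rw [hN]
    simp only
    have hterm : ∀ i ∈ range m, (τx ^ i) (∑ j ∈ range m, (τy ^ j) (τx g - g))
        = (τx ^ (i + 1)) (∑ j ∈ range m, (τy ^ j) g)
          - (τx ^ i) (∑ j ∈ range m, (τy ^ j) g) := by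
      intro i _
      have hinner : ∑ j ∈ range m, (τy ^ j) (τx g - g)
          = τx (∑ j ∈ range m, (τy ^ j) g) - ∑ j ∈ range m, (τy ^ j) g := by
        rw [map_sum, ← Finset.sum_sub_distrib]
        refine Finset.sum_congr rfl fun j _ => ?_
        rw [map_sub]
        congr 1
        have := commfun 1 j g
        rw [pow_one] at this
        exact this.symm
      rw [hinner, map_sub, ← AlgEquiv.mul_apply, ← pow_succ]
    rw [Finset.sum_congr rfl hterm, Finset.sum_range_sub
      (fun i => (τx ^ i) (∑ j ∈ range m, (τy ^ j) g)), hτxm]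
    simp
  have hNy : ∀ h, N (τy h - h) = 0 := by
    intro h
    rw [hN]
    simp only
    have hinner : ∑ j ∈ range m, (τy ^ j) (τy h - h) = 0 := by
      have : ∀ j ∈ range m, (τy ^ j) (τy h - h) = (τy ^ (j + 1)) h - (τy ^ j) h := by
        intro j _
        rw [map_sub, ← AlgEquiv.mul_apply, ← pow_succ]
      rw [Finset.sum_congr rfl this, Finset.sum_range_sub (fun j => (τy ^ j) h), hτym]
      simp
    rw [hinner]
    simp
  have hNfixed : ∀ c, τx c = c → τy c = c →
      N c = ((m : ℕ) : RatFunc2 F) * (((m : ℕ) : RatFunc2 F) * c) := by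
    intro c hcx hcy
    rw [hN]
    simp only
    have hin : ∑ j ∈ range m, (τy ^ j) c = ((m : ℕ) : RatFunc2 F) * c := by
      rw [Finset.sum_congr rfl (fun j _ => pow_fix τy hcy j), Finset.sum_const,
        Finset.card_range, nsmul_eq_mul]
    rw [Finset.sum_congr rfl (fun i _ => by rw [hin, map_mul, map_natCast,
      pow_fix τx hcx i] : ∀ i ∈ range m, (τx ^ i) (∑ j ∈ range m, (τy ^ j) c)
        = ((m : ℕ) : RatFunc2 F) * c)]
    rw [Finset.sum_const, Finset.card_range, nsmul_eq_mul]
  -- the candidate constant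
  set c₀ : RatFunc2 F := (((m : ℕ) : RatFunc2 F) * ((m : ℕ) : RatFunc2 F))⁻¹ * N f with hc₀
  have hc₀x : τx c₀ = c₀ := by
    rw [hc₀, map_mul, map_inv₀, map_mul, map_natCast, hNτx]
  have hc₀y : τy c₀ = c₀ := by
    rw [hc₀, map_mul, map_inv₀, map_mul, map_natCast, hNτy]
  have hc₀mem : c₀ ∈ IntermediateField.adjoin F {RatFunc2.x F ^ m, RatFunc2.y F ^ m} :=
    fixed_mem_adjoin m hm q hq τx τy hτxx hτxy hτyx hτyy c₀ hc₀x hc₀y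
  have hNc₀ : N c₀ = ((m : ℕ) : RatFunc2 F) * (((m : ℕ) : RatFunc2 F) * c₀) :=
    hNfixed c₀ hc₀x hc₀y
  have hmm : (((m : ℕ) : RatFunc2 F) * ((m : ℕ) : RatFunc2 F)) ≠ 0 := mul_ne_zero hmL hmL
  have hNfc₀ : N f = ((m : ℕ) : RatFunc2 F) * (((m : ℕ) : RatFunc2 F) * c₀) := by
    rw [hc₀]
    field_simp
  constructor
  · -- existence
    set f₁ : RatFunc2 F := f - c₀ with hf₁
    have hNf₁ : N f₁ = 0 := by
      rw [hf₁, hNsub, hNfc₀, hNc₀, sub_self]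
    set A : RatFunc2 F := ((m : ℕ) : RatFunc2 F)⁻¹ * ∑ i ∈ range m, (τx ^ i) f₁ with hA
    have hAτx : τx A = A := by
      rw [hA, map_mul, map_inv₀, map_natCast, map_sum]
      congr 1
      have : ∀ i ∈ range m, τx ((τx ^ i) f₁) = (τx ^ (i + 1)) f₁ := by
        intro i _
        rw [← AlgEquiv.mul_apply, ← pow_succ']
      rw [Finset.sum_congr rfl this, shift_sum τx m hτxm]
    have hsum1 : ∑ i ∈ range m, (τx ^ i) (f₁ - A) = 0 := by
      have h1 : ∀ i ∈ range m, (τx ^ i) (f₁ - A) = (τx ^ i) f₁ - A := by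
        intro i _
        rw [map_sub, pow_fix τx hAτx]
      rw [Finset.sum_congr rfl h1, Finset.sum_sub_distrib, Finset.sum_const,
        Finset.card_range, nsmul_eq_mul]
      have : ∑ i ∈ range m, (τx ^ i) f₁ = ((m : ℕ) : RatFunc2 F) * A := by
        rw [hA, ← mul_assoc, mul_inv_cancel₀ hmL, one_mul]
      rw [this, sub_self]
    obtain ⟨g, hg⟩ := hilbert τx m hτxm hmL (f₁ - A) hsum1
    have hsum2 : ∑ j ∈ range m, (τy ^ j) A = 0 := by
      have h1 : ∀ j ∈ range m, (τy ^ j) A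
          = ((m : ℕ) : RatFunc2 F)⁻¹ * ∑ i ∈ range m, (τx ^ i) ((τy ^ j) f₁) := by
        intro j _
        rw [hA, map_mul, map_inv₀, map_natCast, map_sum]
        congr 1
        exact Finset.sum_congr rfl fun i _ => (commfun i j f₁).symm
      rw [Finset.sum_congr rfl h1, ← Finset.mul_sum, Finset.sum_comm]
      have : ∑ i ∈ range m, ∑ j ∈ range m, (τx ^ i) ((τy ^ j) f₁) = N f₁ := by
        rw [hN]
        exact Finset.sum_congr rfl fun i _ => by rw [map_sum]
      rw [this, hNf₁, mul_zero]
    obtain ⟨h, hh⟩ := hilbert τy m hτym hmL A hsum2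
    refine ⟨g, h, c₀, hc₀mem, ?_⟩
    have : f = (f₁ - A) + A + c₀ := by rw [hf₁]; ring
    rw [this, hg, hh]
    ring
  · -- uniqueness of the constant
    intro g h c hcmem hdec
    have hfixE : ∀ (σ : RatFunc2 F ≃ₐ[F] RatFunc2 F),
        σ (RatFunc2.x F ^ m) = RatFunc2.x F ^ m → σ (RatFunc2.y F ^ m) = RatFunc2.y F ^ m →
        σ c = c := by
      intro σ h1 h2
      have hle : IntermediateField.adjoin F {RatFunc2.x F ^ m, RatFunc2.y F ^ m}
          ≤ eqIF σ.toAlgHom (AlgHom.id F (RatFunc2 F)) := by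
        rw [IntermediateField.adjoin_le_iff]
        intro u hu
        rcases hu with h' | h'
        · subst h'; exact h1
        · rw [Set.mem_singleton_iff] at h'; subst h'; exact h2
      exact hle hcmem
    have hτxXm : τx (RatFunc2.x F ^ m) = RatFunc2.x F ^ m := by
      rw [map_pow, hτxx, mul_pow, ← map_pow, ← map_pow, hqm, map_one, map_one, one_mul]
    have hτxYm : τx (RatFunc2.y F ^ m) = RatFunc2.y F ^ m := by rw [map_pow, hτxy]
    have hτyXm : τy (RatFunc2.x F ^ m) = RatFunc2.x F ^ m := by rw [map_pow, hτyx]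
    have hτyYm : τy (RatFunc2.y F ^ m) = RatFunc2.y F ^ m := by
      rw [map_pow, hτyy, mul_pow, ← map_pow, ← map_pow, hqm, map_one, map_one, one_mul]
    have hcx : τx c = c := hfixE τx hτxXm hτxYm
    have hcy : τy c = c := hfixE τy hτyXm hτyYm
    have hNf : N f = ((m : ℕ) : RatFunc2 F) * (((m : ℕ) : RatFunc2 F) * c) := by
      have e1 : N (τx g) = N g := sub_eq_zero.mp (by rw [← hNsub]; exact hNx g)
      have e2 : N (τy h) = N h := sub_eq_zero.mp (by rw [← hNsub]; exact hNy h)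
      rw [hdec, hNadd, hNsub, hNadd, hNsub, e1, e2, hNfixed c hcx hcy]
      ring
    constructor
    · rintro ⟨g', h', hsum⟩
      have hNf0 : N f = 0 := by
        have e1 : N (τx g') = N g' := sub_eq_zero.mp (by rw [← hNsub]; exact hNx g')
        have e2 : N (τy h') = N h' := sub_eq_zero.mp (by rw [← hNsub]; exact hNy h')
        rw [hsum, hNsub, hNadd, hNsub, e1, e2]
        ring
      rw [hNf0] at hNf
      have := hNf.symm
      rw [← mul_assoc] at this
      exact (mul_eq_zero.mp this).resolve_left hmm
    · rintro rfl
      exact ⟨g, h, by rw [hdec, add_zero]⟩
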